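/- If U is a rank-ρ-saturating [n,k]_{q^m/q} system, then the Gaussian binomial coefficient [n choose ρ]_q multiplied by q^{mρ} is at least q^{mk}; equivalently, [n choose ρ]_q ≥ q^{m(k-ρ)}. -/

import Mathlib

/-- `U` covers with radius `r`: every vector of `F_{q^m}^k` lies in the `F_{q^m}`-span
of an `F_q`-subspace of `U` of `F_q`-dimension at most `r`. -/
def RkCovers (K : Type*) {L : Type*} [Field K] [Field L] [Algebra K L]
    {ι : Type*} (U : Submodule K (ι → L)) (r : ℕ) : Prop :=
  ∀ v : ι → L, ∃ S : Submodule K (ι → L), S ≤ U ∧ Module.finrank K S ≤ r ∧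
    v ∈ Submodule.span L (S : Set (ι → L))

/-- `U` is rank-`ρ`-saturating: it covers with radius `ρ` and `ρ` is minimal. -/
def IsRankSat (K : Type*) {L : Type*} [Field K] [Field L] [Algebra K L]
    {ι : Type*} (U : Submodule K (ι → L)) (ρ : ℕ) : Prop :=
  RkCovers K U ρ ∧ ∀ r < ρ, ¬ RkCovers K U r

/-- `s_{q^m/q}(k, ρ)`: the minimal `F_q`-dimension of a rank-`ρ`-saturating
`[n,k]_{q^m/q}` system in `F_{q^m}^k`. -/
noncomputable def sMin (K L : Type*) [Field K] [Field L] [Algebra K L] (k ρ : ℕ) : ℕ :=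
  sInf {n : ℕ | ∃ U : Submodule K (Fin k → L),
    Module.finrank K U = n ∧ Submodule.span L (U : Set (Fin k → L)) = ⊤ ∧
      IsRankSat K U ρ}

/-- Auxiliary: a subspace `S ≤ U` can be extended inside `U` to any intermediate
dimension. -/
lemma exists_intermediate' {K V : Type*} [Field K] [AddCommGroup V] [Module K V]
    [FiniteDimensional K V] :
    ∀ (d : ℕ) (S U : Submodule K V), S ≤ U →
      Module.finrank K S + d ≤ Module.finrank K U →
      ∃ T : Submodule K V, S ≤ T ∧ T ≤ U ∧
        Module.finrank K T = Module.finrank K S + d := by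
  intro d
  induction d with
  | zero => intro S U hSU _; exact ⟨S, le_rfl, hSU, by simp⟩
  | succ d ih =>
    intro S U hSU hle
    have hlt : Module.finrank K S < Module.finrank K U := by omega
    have hne : S ≠ U := by rintro rfl; exact lt_irrefl _ hlt
    obtain ⟨x, hxU, hxS⟩ := SetLike.exists_of_lt (lt_of_le_of_ne hSU hne)
    have hx0 : x ≠ 0 := fun h => hxS (h ▸ S.zero_mem)
    have hdisj : Disjoint S (Submodule.span K {x}) :=
      (Submodule.disjoint_span_singleton' hx0).2 hxS
    have hrk : Module.finrank K ↥(S ⊔ Submodule.span K {x}) = Module.finrank K S + 1 := by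
      have := Submodule.finrank_sup_add_finrank_inf_eq S (Submodule.span K {x})
      rw [hdisj.eq_bot] at this
      simpa [finrank_span_singleton hx0] using this
    have hle' : S ⊔ Submodule.span K {x} ≤ U :=
      sup_le hSU ((Submodule.span_singleton_le_iff_mem x U).2 hxU)
    obtain ⟨T, h1, h2, h3⟩ := ih (S ⊔ Submodule.span K {x}) U hle' (by omega)
    exact ⟨T, le_trans le_sup_left h1, h2, by omega⟩

/-- Counting bound: if `U` is a rank-`ρ`-saturating `[n,k]_{q^m/q}` system, then
`[n choose ρ]_q · q^{mρ} ≥ q^{mk}`, where `[n choose ρ]_q` is the number of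
`ρ`-dimensional `F_q`-subspaces of an `n`-dimensional `F_q`-space. -/
theorem counting_bound (K L : Type*) [Field K] [Field L] [Algebra K L]
    [Fintype K] [Fintype L] {k n ρ : ℕ}
    (U : Submodule K (Fin k → L))
    (hdim : Module.finrank K U = n)
    (hspan : Submodule.span L (U : Set (Fin k → L)) = ⊤)
    (hsat : IsRankSat K U ρ) :
    (Fintype.card K) ^ (Module.finrank K L * k) ≤
      Nat.card {S : Submodule K (Fin n → K) // Module.finrank K S = ρ} *
        (Fintype.card K) ^ (Module.finrank K L * ρ) := by
  classical
  obtain ⟨hcov, hmin⟩ := hsat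
  set m := Module.finrank K L with hm
  have hρn : ρ ≤ n := by
    by_contra h
    push_neg at h
    refine hmin n h (fun v => ⟨U, le_rfl, hdim.le, ?_⟩)
    rw [hspan]; trivial
  -- every vector is in the span of an exactly-ρ-dimensional subspace of U
  have key : ∀ v : Fin k → L, ∃ S : Submodule K (Fin k → L),
      (S ≤ U ∧ Module.finrank K S = ρ) ∧ v ∈ Submodule.span L (S : Set (Fin k → L)) := by
    intro v
    obtain ⟨S₀, hS₀U, hS₀r, hv⟩ := hcov v
    obtain ⟨T, hT1, hT2, hT3⟩ := exists_intermediate' (ρ - Module.finrank K S₀) S₀ U hS₀U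
      (by omega)
    exact ⟨T, ⟨hT2, by omega⟩, Submodule.span_mono (by exact_mod_cast hT1) hv⟩
  set T := {S : Submodule K (Fin k → L) // S ≤ U ∧ Module.finrank K S = ρ} with hT
  -- a basis for each member of T
  have hbasis : ∀ S : T, ∃ w : Fin ρ → (Fin k → L),
      (Submodule.span L (S.1 : Set (Fin k → L)) : Set (Fin k → L)) ⊆
        ↑(Submodule.span L (Set.range w)) := by
    rintro ⟨S, hSU, hSρ⟩
    let b := Module.finBasisOfFinrankEq K S hSρ
    refine ⟨fun i => (b i : Fin k → L), ?_⟩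
    have h1 : (S : Set (Fin k → L)) ⊆
        ↑(Submodule.span L (Set.range fun i => (b i : Fin k → L))) := by
      intro s hs
      have : (⟨s, hs⟩ : S) ∈ Submodule.span K (Set.range b) := by
        rw [b.span_eq]; trivial
      have h2 : s ∈ Submodule.map S.subtype (Submodule.span K (Set.range b)) :=
        ⟨⟨s, hs⟩, this, rfl⟩
      rw [Submodule.map_span] at h2
      have h3 : (S.subtype '' Set.range b) = Set.range fun i => (b i : Fin k → L) := by
        ext x; simp [Set.range_comp]
      rw [h3] at h2
      exact Submodule.span_le_restrictScalars K L _ h2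
    have := Submodule.span_le.2 h1
    exact fun x hx => this hx
  choose w hw using hbasis
  -- coefficient extraction
  have coeff : ∀ (S : T) (x : Fin k → L),
      x ∈ Submodule.span L (S.1 : Set (Fin k → L)) →
      ∃ c : Fin ρ → L, ∑ i, c i • w S i = x := by
    intro S x hx
    have := hw S hx
    rwa [SetLike.mem_coe, Submodule.mem_span_range_iff_exists_fun] at this
  choose f hf using key
  choose c hc using fun v => coeff ⟨f v, (hf v).1⟩ v (hf v).2
  -- injection from the full space
  haveI : Finite (Submodule K (Fin k → L)) :=
    Finite.of_injective _ (SetLike.coe_injective (A := Submodule K (Fin k → L)))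
  have hinj : Function.Injective
      (fun v : Fin k → L => ((⟨f v, (hf v).1⟩ : T), c v)) := by
    have : Function.LeftInverse
        (fun p : T × (Fin ρ → L) => ∑ i, p.2 i • w p.1 i)
        (fun v : Fin k → L => ((⟨f v, (hf v).1⟩ : T), c v)) := fun v => hc v
    exact this.injective
  have hcard : Nat.card (Fin k → L) ≤ Nat.card T * Nat.card (Fin ρ → L) := by
    have := Nat.card_le_card_of_injective _ hinj
    rwa [Nat.card_prod] at this
  -- identify Nat.card T with the subspace count in Fin n → K
  have hTcount : Nat.card T =
      Nat.card {S : Submodule K (Fin n → K) // Module.finrank K S = ρ} := by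
    let e2 : U ≃ₗ[K] (Fin n → K) := (Module.finBasisOfFinrankEq K U hdim).equivFun
    let E : {p : Submodule K (Fin k → L) // p ≤ U} ≃ Submodule K (Fin n → K) :=
      ((Submodule.MapSubtype.orderIso U).symm.trans (Submodule.orderIsoMapComap e2)).toEquiv
    have hE : ∀ p : {p : Submodule K (Fin k → L) // p ≤ U},
        Module.finrank K (E p) = Module.finrank K p.1 := by
      rintro ⟨p, hp⟩
      have h1 : Module.finrank K
          (Submodule.map (e2 : U →ₗ[K] (Fin n → K)) ((Submodule.MapSubtype.orderIso U).symm ⟨p, hp⟩)) =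
          Module.finrank K ((Submodule.MapSubtype.orderIso U).symm ⟨p, hp⟩) :=
        LinearEquiv.finrank_map_eq e2 _
      have h2 : Submodule.map U.subtype ((Submodule.MapSubtype.orderIso U).symm ⟨p, hp⟩) = p := by
        have := (Submodule.MapSubtype.orderIso U).apply_symm_apply ⟨p, hp⟩
        exact congrArg Subtype.val this
      have h3 := Submodule.finrank_map_subtype_eq U
        ((Submodule.MapSubtype.orderIso U).symm ⟨p, hp⟩)
      rw [h2] at h3
      exact h1.trans h3.symm
    refine Nat.card_congr ?_
    exact ((Equiv.subtypeSubtypeEquivSubtypeInter (· ≤ U)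
        (fun S => Module.finrank K S = ρ)).symm.trans
      (Equiv.subtypeEquiv E (fun p => by rw [hE p]))).symm.symm
  -- cardinality computations
  have hL : Fintype.card L = Fintype.card K ^ m := Module.card_eq_pow_finrank (K := K) (V := L)
  have hlhs : Nat.card (Fin k → L) = Fintype.card K ^ (m * k) := by
    rw [Nat.card_eq_fintype_card, Fintype.card_fun, hL, ← pow_mul, Fintype.card_fin]
  have hrhs : Nat.card (Fin ρ → L) = Fintype.card K ^ (m * ρ) := by
    rw [Nat.card_eq_fintype_card, Fintype.card_fun, hL, ← pow_mul, Fintype.card_fin]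
  calc Fintype.card K ^ (m * k) = Nat.card (Fin k → L) := hlhs.symm
    _ ≤ Nat.card T * Nat.card (Fin ρ → L) := hcard
    _ = Nat.card {S : Submodule K (Fin n → K) // Module.finrank K S = ρ} *
        Fintype.card K ^ (m * ρ) := by rw [hTcount, hrhs]
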